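/- Consider a billiard trajectory inside a cone with vertex at the origin, with p k and p (k+1) linearly independent for every k. Assume the last coordinate of each p k is positive, set q k := ((p k)ₙ)⁻¹ • p k, and assume there is a > 0 with ‖q k‖ ≤ a for all k. Then the sequence (q k) converges to a limit q ∈ ℝⁿ; moreover, if all q k lie in a closed set γ ⊆ ℝⁿ, then q ∈ γ. (Lemma 2.3, part 3.) -/

import Mathlib

open InnerProductGeometry RealInnerProductSpace Filter

private lemma coord_abs_le_norm {n : ℕ} (x : EuclideanSpace ℝ (Fin n)) (i : Fin n) :
    |x i| ≤ ‖x‖ := by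
  have h : ⟪EuclideanSpace.single i (1:ℝ), x⟫ = x i := by
    rw [EuclideanSpace.inner_single_left]; simp
  have h2 := abs_real_inner_le_norm (EuclideanSpace.single i (1:ℝ)) x
  rwa [h, EuclideanSpace.norm_single, norm_one, one_mul] at h2

private lemma unit_dist_le_angle {V : Type*} [NormedAddCommGroup V] [InnerProductSpace ℝ V]
    {x y : V} (hx : ‖x‖ = 1) (hy : ‖y‖ = 1) : ‖x - y‖ ≤ angle x y := by
  have h1 : Real.cos (angle x y) = ⟪x, y⟫ := by
    rw [cos_angle, hx, hy]; ring
  have hcos := Real.one_sub_sq_div_two_le_cos (x := angle x y)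
  have hsq : ‖x - y‖ ^ 2 ≤ (angle x y) ^ 2 := by
    rw [norm_sub_sq_real, hx, hy]; nlinarith
  have := Real.sqrt_le_sqrt hsq
  rwa [Real.sqrt_sq (norm_nonneg _), Real.sqrt_sq (angle_nonneg _ _)] at this

/-- Lemma 2.3, part 3: along a billiard trajectory inside a cone with vertex at
the origin, the normalized points `q k` converge, and the limit lies in any
closed set containing all the `q k`. -/
theorem billiard_cone_q_converges {n : ℕ} (hn : 2 ≤ n)
    (p ν v : ℕ → EuclideanSpace ℝ (Fin n))
    (hp0 : ∀ k, p k ≠ 0) (hpne : ∀ k, p (k + 1) ≠ p k)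
    (hν : ∀ k, ‖ν k‖ = 1) (hνp : ∀ k, ⟪ν k, p k⟫ = 0)
    (hv : ∀ k, v k = ‖p (k + 1) - p k‖⁻¹ • (p (k + 1) - p k))
    (hrefl : ∀ k, v (k + 1) = v k - (2 * ⟪v k, ν (k + 1)⟫) • ν (k + 1))
    (hvν : ∀ k, 0 < ⟪v k, ν k⟫)
    (hli : ∀ k, LinearIndependent ℝ ![p k, p (k + 1)])
    (hlast : ∀ k, 0 < p k ⟨n - 1, by omega⟩)
    (q : ℕ → EuclideanSpace ℝ (Fin n))
    (hq : ∀ k, q k = (p k ⟨n - 1, by omega⟩)⁻¹ • p k)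
    (a : ℝ) (ha : 0 < a) (hqa : ∀ k, ‖q k‖ ≤ a) :
    ∃ qlim : EuclideanSpace ℝ (Fin n), Tendsto q atTop (nhds qlim) ∧
      ∀ γ : Set (EuclideanSpace ℝ (Fin n)),
        IsClosed γ → (∀ k, q k ∈ γ) → qlim ∈ γ := by
  have i : Fin n := ⟨n - 1, by omega⟩
  set θ : ℕ → ℝ := fun k => angle (p k) (p (k + 1)) with hθdef
  set α : ℕ → ℝ := fun k => angle (v k) (p k) with hαdef
  have hd : ∀ k, p (k + 1) - p k ≠ 0 := fun k => sub_ne_zero.2 (hpne k)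
  have hdpos : ∀ k, (0:ℝ) < ‖p (k + 1) - p k‖⁻¹ := fun k =>
    inv_pos.2 (norm_pos_iff.2 (hd k))
  have hangv : ∀ k (y : EuclideanSpace ℝ (Fin n)),
      angle (v k) y = angle (p (k + 1) - p k) y := fun k y => by
    rw [hv k, angle_smul_left_of_pos _ _ (hdpos k)]
  have hv1 : ∀ k, ‖v k‖ = 1 := fun k => by
    rw [hv k, norm_smul, norm_inv, norm_norm, inv_mul_cancel₀ (norm_ne_zero_iff.2 (hd k))]
  -- reflection preserves the angle with p (k+1)
  have hrefl_ang : ∀ k, angle (v (k + 1)) (p (k + 1)) = angle (v k) (p (k + 1)) := by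
    intro k
    have hinner : ⟪v (k + 1), p (k + 1)⟫ = ⟪v k, p (k + 1)⟫ := by
      rw [hrefl k, inner_sub_left, real_inner_smul_left, hνp (k + 1)]; ring
    rw [angle, angle, hinner, hv1 (k + 1), hv1 k]
  -- the key angle recursion
  have hαθ : ∀ k, α k = θ k + α (k + 1) := by
    intro k
    have htri := angle_add_angle_sub_add_angle_sub_eq_pi (p (k + 1)) (hp0 k)
    have h1 : angle (p k) (p k - p (k + 1)) = Real.pi - angle (p k) (p (k + 1) - p k) := by
      rw [show p k - p (k + 1) = -(p (k + 1) - p k) by abel, angle_neg_right]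
    have hαk : α k = angle (p k) (p (k + 1) - p k) := by
      rw [hαdef]; simp only; rw [hangv k, angle_comm]
    have hαk1 : α (k + 1) = angle (p (k + 1)) (p (k + 1) - p k) := by
      rw [hαdef]; simp only
      rw [hrefl_ang k, hangv k, angle_comm]
    have hθk : θ k = angle (p (k + 1)) (p k) := angle_comm _ _
    rw [hαk, hαk1, hθk]
    rw [h1] at htri
    linarith [htri]
  have hθ0 : ∀ k, 0 ≤ θ k := fun k => angle_nonneg _ _
  have htel : ∀ m, ∑ j ∈ Finset.range m, θ j = α 0 - α m := by
    intro m
    induction m with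
    | zero => simp
    | succ m ih => rw [Finset.sum_range_succ, ih, hαθ m]; ring
  have hsum : Summable θ := by
    apply summable_of_sum_range_le hθ0 (c := Real.pi)
    intro m
    rw [htel m]
    have h1 : α 0 ≤ Real.pi := angle_le_pi (v 0) (p 0)
    have h2 : (0:ℝ) ≤ α m := angle_nonneg (v m) (p m)
    linarith
  -- facts about q
  have hlast' : ∀ k, (0:ℝ) < (p k ⟨n - 1, by omega⟩)⁻¹ := fun k => inv_pos.2 (hlast k)
  have hq1 : ∀ k, q k ⟨n - 1, by omega⟩ = 1 := by
    intro k
    rw [hq k]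
    show (p k ⟨n - 1, by omega⟩)⁻¹ * p k ⟨n - 1, by omega⟩ = 1
    exact inv_mul_cancel₀ (ne_of_gt (hlast k))
  have hqn1 : ∀ k, 1 ≤ ‖q k‖ := by
    intro k
    have := coord_abs_le_norm (q k) ⟨n - 1, by omega⟩
    rw [hq1 k] at this; simpa using this
  have hqne : ∀ k, ‖q k‖ ≠ 0 := fun k => ne_of_gt (lt_of_lt_of_le one_pos (hqn1 k))
  have ha1 : (1:ℝ) ≤ a := le_trans (hqn1 0) (hqa 0)
  have hθq : ∀ k, angle (q k) (q (k + 1)) = θ k := by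
    intro k
    rw [hq k, hq (k + 1), angle_smul_left_of_pos _ _ (hlast' k),
      angle_smul_right_of_pos _ _ (hlast' (k + 1))]
  -- unit vectors
  set u : ℕ → EuclideanSpace ℝ (Fin n) := fun k => ‖q k‖⁻¹ • q k with hudef
  have hu1 : ∀ k, ‖u k‖ = 1 := fun k => by
    rw [hudef]; simp only
    rw [norm_smul, norm_inv, norm_norm, inv_mul_cancel₀ (hqne k)]
  have hqu : ∀ k, q k = ‖q k‖ • u k := fun k => by
    rw [hudef]; simp only; rw [smul_inv_smul₀ (hqne k)]
  have hui : ∀ k, u k ⟨n - 1, by omega⟩ = ‖q k‖⁻¹ := by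
    intro k
    rw [hudef]
    show ‖q k‖⁻¹ * q k ⟨n - 1, by omega⟩ = ‖q k‖⁻¹
    rw [hq1 k, mul_one]
  have huangle : ∀ k, ‖u k - u (k + 1)‖ ≤ θ k := by
    intro k
    have : angle (u k) (u (k + 1)) = θ k := by
      rw [hudef]; simp only
      rw [angle_smul_left_of_pos _ _ (inv_pos.2 (lt_of_lt_of_le one_pos (hqn1 k))),
        angle_smul_right_of_pos _ _ (inv_pos.2 (lt_of_lt_of_le one_pos (hqn1 (k + 1))))]
      exact hθq k
    rw [← this]
    exact unit_dist_le_angle (hu1 k) (hu1 (k + 1))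
  -- distance estimate
  have hdist : ∀ k, dist (q k) (q (k + 1)) ≤ 2 * a ^ 2 * θ k := by
    intro k
    have hs := hqn1 k
    have ht := hqn1 (k + 1)
    have hsa := hqa k
    have hta := hqa (k + 1)
    have hinv : |‖q k‖⁻¹ - ‖q (k + 1)‖⁻¹| ≤ θ k := by
      have h := coord_abs_le_norm (u k - u (k + 1)) ⟨n - 1, by omega⟩
      have he : (u k - u (k + 1)) ⟨n - 1, by omega⟩ = ‖q k‖⁻¹ - ‖q (k + 1)‖⁻¹ := by
        show u k ⟨n - 1, by omega⟩ - u (k + 1) ⟨n - 1, by omega⟩ = _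
        rw [hui k, hui (k + 1)]
      rw [he] at h
      exact h.trans (huangle k)
    have hst : |‖q k‖ - ‖q (k + 1)‖| ≤ a ^ 2 * θ k := by
      have heq : ‖q k‖ - ‖q (k + 1)‖ =
          ‖q k‖ * ‖q (k + 1)‖ * (‖q (k + 1)‖⁻¹ - ‖q k‖⁻¹) := by
        field_simp
      rw [heq, abs_mul, abs_sub_comm, abs_mul]
      have h1 : |‖q k‖| = ‖q k‖ := abs_of_nonneg (by linarith)
      have h2 : |‖q (k + 1)‖| = ‖q (k + 1)‖ := abs_of_nonneg (by linarith)
      rw [h1, h2]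
      have h3 : ‖q k‖ * ‖q (k + 1)‖ ≤ a * a := mul_le_mul hsa hta (by linarith) (by linarith)
      have h4 := mul_le_mul h3 hinv (abs_nonneg _) (by positivity : (0:ℝ) ≤ a * a)
      nlinarith [h4]
    rw [dist_eq_norm]
    have hdec : q k - q (k + 1) =
        ‖q k‖ • (u k - u (k + 1)) + (‖q k‖ - ‖q (k + 1)‖) • u (k + 1) := by
      rw [smul_sub, sub_smul]
      rw [← hqu k, ← hqu (k + 1)]
      abel
    rw [hdec]
    calc ‖‖q k‖ • (u k - u (k + 1)) + (‖q k‖ - ‖q (k + 1)‖) • u (k + 1)‖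
        ≤ ‖‖q k‖ • (u k - u (k + 1))‖ + ‖(‖q k‖ - ‖q (k + 1)‖) • u (k + 1)‖ :=
          norm_add_le _ _
      _ = ‖q k‖ * ‖u k - u (k + 1)‖ + |‖q k‖ - ‖q (k + 1)‖| * 1 := by
          rw [norm_smul, norm_smul, Real.norm_eq_abs, Real.norm_eq_abs,
            abs_of_nonneg (by linarith : (0:ℝ) ≤ ‖q k‖), hu1 (k + 1)]
      _ ≤ a * θ k + a ^ 2 * θ k := by
          rw [mul_one]
          exact add_le_add (mul_le_mul hsa (huangle k) (norm_nonneg _) ha.le) hst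
      _ ≤ 2 * a ^ 2 * θ k := by
          nlinarith [mul_nonneg (mul_nonneg (sub_nonneg.2 ha1) ha.le) (hθ0 k)]
  -- conclude
  have hcauchy : CauchySeq q :=
    cauchySeq_of_dist_le_of_summable (fun k => 2 * a ^ 2 * θ k) hdist (hsum.mul_left _)
  obtain ⟨qlim, hlim⟩ := cauchySeq_tendsto_of_complete hcauchy
  exact ⟨qlim, hlim, fun γ hγ hmem => hγ.mem_of_tendsto hlim (Eventually.of_forall hmem)⟩
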